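/- Let K be a field and n ≥ 2 a natural number, and let L_K(1,n) be the Leavitt algebra of type (1,n). Then L_K(1,n) is a simple ring (it has no two-sided ideals other than {0} and itself), and moreover for each nonzero x ∈ L_K(1,n) there exist elements a, b ∈ L_K(1,n) with a*x*b = 1. -/

import Mathlib

/-- The defining relations of the Leavitt algebra `L_K(1,n)`: generators
`x₁, …, xₙ` (encoded as `Sum.inl i`) and `y₁, …, yₙ` (encoded as `Sum.inr i`), subject to
`yᵢ xⱼ = δᵢⱼ 1` and `∑ᵢ xᵢ yᵢ = 1`. -/
inductive LeavittRel (K : Type) [Field K] (n : ℕ) :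
    FreeAlgebra K (Fin n ⊕ Fin n) → FreeAlgebra K (Fin n ⊕ Fin n) → Prop
  | yx_self (i : Fin n) :
      LeavittRel K n (FreeAlgebra.ι K (Sum.inr i) * FreeAlgebra.ι K (Sum.inl i)) 1
  | yx_ne {i j : Fin n} (h : i ≠ j) :
      LeavittRel K n (FreeAlgebra.ι K (Sum.inr i) * FreeAlgebra.ι K (Sum.inl j)) 0
  | xy_sum :
      LeavittRel K n (∑ i : Fin n, FreeAlgebra.ι K (Sum.inl i) * FreeAlgebra.ι K (Sum.inr i)) 1

/-- The Leavitt algebra `L_K(1,n)` of type `(1,n)`. -/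
abbrev LeavittAlgebra (K : Type) [Field K] (n : ℕ) : Type :=
  RingQuot (LeavittRel K n)

/-- A subset of a ring is a two-sided ideal. -/
def IsTwoSidedIdealSet {R : Type} [Zero R] [Add R] [Neg R] [Mul R] (I : Set R) : Prop :=
  (0 : R) ∈ I ∧ (∀ a ∈ I, ∀ b ∈ I, a + b ∈ I) ∧ (∀ a ∈ I, -a ∈ I) ∧
    ∀ x : R, ∀ a ∈ I, x * a ∈ I ∧ a * x ∈ I

namespace LeavittProof

variable (K : Type) [Field K] (n : ℕ)

/-- The generator `xᵢ`. -/
noncomputable def xg (i : Fin n) : LeavittAlgebra K n :=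
  RingQuot.mkAlgHom K (LeavittRel K n) (FreeAlgebra.ι K (Sum.inl i))

/-- The generator `yᵢ`. -/
noncomputable def yg (i : Fin n) : LeavittAlgebra K n :=
  RingQuot.mkAlgHom K (LeavittRel K n) (FreeAlgebra.ι K (Sum.inr i))

lemma yx_self (i : Fin n) : yg K n i * xg K n i = 1 := by
  have := RingQuot.mkAlgHom_rel K (LeavittRel.yx_self (K := K) (n := n) i)
  simpa [xg, yg, map_mul, map_one] using this

lemma yx_ne {i j : Fin n} (h : i ≠ j) : yg K n i * xg K n j = 0 := by
  have := RingQuot.mkAlgHom_rel K (LeavittRel.yx_ne (K := K) (n := n) h)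
  simpa [xg, yg, map_mul] using this

lemma xy_sum : ∑ i : Fin n, xg K n i * yg K n i = 1 := by
  have := RingQuot.mkAlgHom_rel K (LeavittRel.xy_sum (K := K) (n := n))
  simpa [xg, yg, map_sum, map_mul, map_one] using this

/-- For a word `w = [a₁, …, a_k]`, the monomial `x_{a₁} ⋯ x_{a_k}`. -/
noncomputable def XW : List (Fin n) → LeavittAlgebra K n
  | [] => 1
  | a :: w => xg K n a * XW w

/-- For a word `w = [a₁, …, a_k]`, the monomial `y_{a_k} ⋯ y_{a₁}`. -/
noncomputable def YW : List (Fin n) → LeavittAlgebra K n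
  | [] => 1
  | a :: w => YW w * yg K n a

@[simp] lemma XW_nil : XW K n [] = 1 := rfl
@[simp] lemma XW_cons (a : Fin n) (w : List (Fin n)) :
    XW K n (a :: w) = xg K n a * XW K n w := rfl
@[simp] lemma YW_nil : YW K n [] = 1 := rfl
@[simp] lemma YW_cons (a : Fin n) (w : List (Fin n)) :
    YW K n (a :: w) = YW K n w * yg K n a := rfl

lemma XW_append (u v : List (Fin n)) : XW K n (u ++ v) = XW K n u * XW K n v := by
  induction u with
  | nil => simp
  | cons a u ih => simp [ih, mul_assoc]

lemma YW_append (u v : List (Fin n)) : YW K n (u ++ v) = YW K n v * YW K n u := by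
  induction u with
  | nil => simp
  | cons a u ih => simp [ih, mul_assoc]

lemma YX_self (w : List (Fin n)) : YW K n w * XW K n w = 1 := by
  induction w with
  | nil => simp
  | cons a w ih =>
      simp only [XW_cons, YW_cons]
      rw [mul_assoc, ← mul_assoc (yg K n a), yx_self, one_mul, ih]

lemma YX_prefix (v u : List (Fin n)) : YW K n v * XW K n (v ++ u) = XW K n u := by
  rw [XW_append, ← mul_assoc, YX_self, one_mul]

lemma YX_suffix (v u : List (Fin n)) : YW K n (v ++ u) * XW K n v = YW K n u := by
  rw [YW_append, mul_assoc, YX_self, mul_one]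

lemma YX_zero : ∀ v u : List (Fin n), ¬ v <+: u → ¬ u <+: v → YW K n v * XW K n u = 0
  | [], u, hv, _ => absurd (List.nil_prefix (l := u)) hv
  | a :: v, [], _, hu => absurd (List.nil_prefix (l := a :: v)) hu
  | a :: v, b :: u, hv, hu => by
      by_cases hab : a = b
      · subst hab
        have h1 : ¬ v <+: u := fun h => hv (List.cons_prefix_cons.mpr ⟨rfl, h⟩)
        have h2 : ¬ u <+: v := fun h => hu (List.cons_prefix_cons.mpr ⟨rfl, h⟩)
        simp only [XW_cons, YW_cons]
        rw [mul_assoc, ← mul_assoc (yg K n a), yx_self, one_mul, YX_zero v u h1 h2]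
      · simp only [XW_cons, YW_cons]
        rw [mul_assoc, ← mul_assoc (yg K n a), yx_ne K n hab, zero_mul, mul_zero]

lemma sum_words (N : ℕ) :
    ∑ σ : Fin N → Fin n, XW K n (List.ofFn σ) * YW K n (List.ofFn σ) = 1 := by
  induction N with
  | zero => simp
  | succ N ih =>
      rw [← Equiv.sum_comp (Fin.consEquiv fun _ : Fin (N + 1) => Fin n)
        (fun σ => XW K n (List.ofFn σ) * YW K n (List.ofFn σ))]
      have hof : ∀ (p : Fin n × (Fin N → Fin n)),
          List.ofFn ((Fin.consEquiv fun _ : Fin (N + 1) => Fin n) p)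
            = p.1 :: List.ofFn p.2 := by
        intro p
        rw [List.ofFn_succ]
        simp [Fin.consEquiv]
      calc ∑ p : Fin n × (Fin N → Fin n),
            XW K n (List.ofFn ((Fin.consEquiv fun _ : Fin (N + 1) => Fin n) p)) *
              YW K n (List.ofFn ((Fin.consEquiv fun _ : Fin (N + 1) => Fin n) p))
          = ∑ i : Fin n, ∑ τ : Fin N → Fin n,
              xg K n i * (XW K n (List.ofFn τ) * YW K n (List.ofFn τ)) * yg K n i := by
            rw [Fintype.sum_prod_type]
            refine Finset.sum_congr rfl fun i _ => Finset.sum_congr rfl fun τ _ => ?_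
            rw [hof ⟨i, τ⟩]
            simp only [XW_cons, YW_cons]
            rw [mul_assoc, mul_assoc, mul_assoc]
        _ = ∑ i : Fin n, xg K n i * yg K n i := by
            refine Finset.sum_congr rfl fun i _ => ?_
            rw [← Finset.sum_mul, ← Finset.mul_sum, ih, mul_one]
        _ = 1 := xy_sum K n

/-- The monomial `x_α y_β` attached to a pair of words. -/
noncomputable def mono (p : List (Fin n) × List (Fin n)) : LeavittAlgebra K n :=
  XW K n p.1 * YW K n p.2

lemma mono_mul_mem (p q : List (Fin n) × List (Fin n)) :
    mono K n p * mono K n q ∈ Submodule.span K (Set.range (mono K n)) := by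
  rcases p with ⟨α, β⟩; rcases q with ⟨γ, δ⟩
  by_cases h1 : β <+: γ
  · obtain ⟨t, rfl⟩ := h1
    have he : mono K n (α, β) * mono K n (β ++ t, δ) = mono K n (α ++ t, δ) := by
      simp only [mono]
      rw [mul_assoc, ← mul_assoc (YW K n β), YX_prefix, XW_append, mul_assoc]
    rw [he]
    exact Submodule.subset_span ⟨(α ++ t, δ), rfl⟩
  · by_cases h2 : γ <+: β
    · obtain ⟨t, rfl⟩ := h2
      have he : mono K n (α, γ ++ t) * mono K n (γ, δ) = mono K n (α, δ ++ t) := by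
        simp only [mono]
        rw [mul_assoc, ← mul_assoc (YW K n (γ ++ t)), YX_suffix, YW_append]
      rw [he]
      exact Submodule.subset_span ⟨(α, δ ++ t), rfl⟩
    · have he : mono K n (α, β) * mono K n (γ, δ) = 0 := by
        simp only [mono]
        rw [mul_assoc, ← mul_assoc (YW K n β), YX_zero K n β γ h1 h2, zero_mul, mul_zero]
      rw [he]
      exact Submodule.zero_mem _

lemma span_mono_top : Submodule.span K (Set.range (mono K n)) = ⊤ := by
  rw [eq_top_iff]
  rintro z -
  obtain ⟨f, rfl⟩ := RingQuot.mkAlgHom_surjective K (LeavittRel K n) z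
  have hmul : ∀ z w : LeavittAlgebra K n,
      z ∈ Submodule.span K (Set.range (mono K n)) →
      w ∈ Submodule.span K (Set.range (mono K n)) →
      z * w ∈ Submodule.span K (Set.range (mono K n)) := by
    intro z w hz hw
    have h2 : Submodule.span K (Set.range (mono K n)) * Submodule.span K (Set.range (mono K n))
        ≤ Submodule.span K (Set.range (mono K n)) := by
      rw [Submodule.span_mul_span, Submodule.span_le]
      rintro u ⟨a, ⟨p, rfl⟩, b, ⟨q, rfl⟩, rfl⟩
      exact mono_mul_mem K n p q
    exact h2 (Submodule.mul_mem_mul hz hw)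
  induction f using FreeAlgebra.induction with
  | grade0 r =>
      rw [AlgHom.commutes, Algebra.algebraMap_eq_smul_one]
      refine Submodule.smul_mem _ r (Submodule.subset_span ⟨([], []), ?_⟩)
      simp [mono]
  | grade1 g =>
      rcases g with i | i
      · refine Submodule.subset_span ⟨([i], []), ?_⟩
        simp [mono, xg]
      · refine Submodule.subset_span ⟨([], [i]), ?_⟩
        simp [mono, yg]
  | mul a b iha ihb =>
      rw [map_mul]
      exact hmul _ _ iha ihb
  | add a b iha ihb =>
      rw [map_add]
      exact Submodule.add_mem _ iha ihb

/-- Key step: any nonzero `K`-combination of the monomials `x_γ` can be multiplied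
to `1`. -/
lemma key_x (hn : 2 ≤ n) (d : List (Fin n) →₀ K) (hd : d ≠ 0) :
    ∃ a b : LeavittAlgebra K n,
      a * (d.sum fun γ k => k • XW K n γ) * b = 1 := by
  classical
  obtain ⟨γ₀, hγ₀, hmin⟩ :=
    d.support.exists_min_image (fun γ => γ.length) (Finsupp.support_nonempty_iff.mpr hd)
  set M := d.support.sup fun γ => γ.length with hM
  set a0 : Fin n := ⟨0, by omega⟩ with ha0
  set b1 : Fin n := ⟨1, by omega⟩ with hb1
  set w : List (Fin n) := b1 :: List.replicate M a0 with hw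
  have hterm : ∀ γ ∈ d.support,
      YW K n w * (YW K n γ₀ * XW K n γ) * XW K n w
        = if γ = γ₀ then 1 else 0 := by
    intro γ hγ
    by_cases hpre : γ₀ <+: γ
    · obtain ⟨μ, rfl⟩ := hpre
      by_cases hμ : μ = []
      · subst hμ
        rw [if_pos (by simp), List.append_nil, YX_self, mul_one, YX_self]
      · have hne : γ₀ ++ μ ≠ γ₀ := by simp [hμ]
        rw [if_neg hne, YX_prefix, mul_assoc, ← XW_append]
        have hlenμ : μ.length ≤ M := by
          have h := Finset.le_sup (f := fun γ : List (Fin n) => γ.length) hγ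
          rw [← hM] at h
          simp only [List.length_append] at h
          omega
        apply YX_zero
        · -- ¬ w <+: μ ++ w
          intro hcon
          obtain ⟨c, μ', rfl⟩ : ∃ c μ', μ = c :: μ' := by
            cases μ with
            | nil => exact absurd rfl hμ
            | cons c μ' => exact ⟨c, μ', rfl⟩
          have hlt : μ'.length + 1 < w.length := by
            simp only [hw, List.length_cons, List.length_replicate]
            simp only [List.length_cons] at hlenμ
            omega
          have hget := hcon.getElem (i := μ'.length + 1) hlt
          have hL : w[μ'.length + 1]'hlt = a0 := by
            simp only [hw, List.getElem_cons_succ]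
            rw [List.getElem_replicate]
          have hR : ((c :: μ') ++ w)[μ'.length + 1]'(by
              simp only [List.length_append, List.length_cons]; omega) = b1 := by
            rw [List.getElem_append_right (by simp)]
            simp [hw]
          rw [hL] at hget
          rw [hR] at hget
          have : (0 : ℕ) = 1 := congrArg Fin.val hget
          omega
        · -- ¬ μ ++ w <+: w
          intro hcon
          have := hcon.length_le
          simp only [List.length_append] at this
          have : μ.length = 0 := by omega
          exact hμ (List.eq_nil_of_length_eq_zero this)
    · have hpre2 : ¬ γ <+: γ₀ := by
        intro hc
        have h1 := hc.length_le
        have h2 := hmin γ hγ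
        have h3 : γ = γ₀ := hc.eq_of_length (by omega)
        exact hpre (by rw [h3])
      rw [YX_zero K n γ₀ γ hpre hpre2, mul_zero, zero_mul]
      have hne3 : γ ≠ γ₀ := by intro h; subst h; exact hpre List.prefix_rfl
      rw [if_neg hne3]
  have hABz : (YW K n w * YW K n γ₀) * (d.sum fun γ k => k • XW K n γ) * XW K n w
      = d γ₀ • (1 : LeavittAlgebra K n) := by
    rw [Finsupp.mul_sum, Finsupp.sum_mul]
    rw [Finsupp.sum_congr (g2 := fun γ k =>
      if γ = γ₀ then k • (1 : LeavittAlgebra K n) else 0) ?_]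
    · rw [Finsupp.sum_ite_eq', if_pos hγ₀]
    · intro γ hγ
      rw [mul_smul_comm, smul_mul_assoc, mul_assoc (YW K n w), hterm γ hγ]
      by_cases h : γ = γ₀ <;> simp [h]
  have hd0 : d γ₀ ≠ 0 := Finsupp.mem_support_iff.mp hγ₀
  refine ⟨(d γ₀)⁻¹ • (YW K n w * YW K n γ₀), XW K n w, ?_⟩
  rw [smul_mul_assoc, smul_mul_assoc, hABz, smul_smul, inv_mul_cancel₀ hd0, one_smul]

lemma main_step (hn : 2 ≤ n) (z : LeavittAlgebra K n) (hz : z ≠ 0) :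
    ∃ a b : LeavittAlgebra K n, a * z * b = 1 := by
  classical
  have hmem : z ∈ Submodule.span K (Set.range (mono K n)) := by
    rw [span_mono_top]; trivial
  rw [Finsupp.mem_span_range_iff_exists_finsupp] at hmem
  obtain ⟨c, hc⟩ := hmem
  set N := (c.support.sup fun p => p.2.length) + 1 with hN
  have hτex : ∃ σ : Fin N → Fin n, z * XW K n (List.ofFn σ) ≠ 0 := by
    by_contra h
    push_neg at h
    apply hz
    have h1 : z * (∑ σ : Fin N → Fin n, XW K n (List.ofFn σ) * YW K n (List.ofFn σ)) = z := by
      rw [sum_words, mul_one]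
    rw [← h1, Finset.mul_sum]
    refine Finset.sum_eq_zero fun σ _ => ?_
    rw [← mul_assoc, h σ, zero_mul]
  obtain ⟨σ, hσ⟩ := hτex
  set τ : List (Fin n) := List.ofFn σ with hτ
  have hτlen : τ.length = N := by simp [hτ, hN]
  set T := Finsupp.linearCombination K (fun γ : List (Fin n) => XW K n γ) with hT
  set d : List (Fin n) →₀ K :=
    c.sum fun p k => if p.2 <+: τ then Finsupp.single (p.1 ++ τ.drop p.2.length) k else 0
    with hdd
  have hTd : T d = z * XW K n τ := by
    rw [hdd, map_finsuppSum, ← hc, Finsupp.sum_mul]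
    refine Finsupp.sum_congr ?_
    intro p hp
    simp only [mono]
    by_cases hpre : p.2 <+: τ
    · obtain ⟨t, htt⟩ := hpre
      rw [if_pos ⟨t, htt⟩, hT, Finsupp.linearCombination_single]
      have hdrop : τ.drop p.2.length = t := by
        rw [← htt, List.drop_left]
      rw [hdrop, smul_mul_assoc, mul_assoc, ← htt, YX_prefix, ← XW_append]
    · rw [if_neg hpre, map_zero]
      have h2 : ¬ τ <+: p.2 := by
        intro hcon
        have hl := hcon.length_le
        have hble : p.2.length ≤ c.support.sup (fun p => p.2.length) :=
          Finset.le_sup (f := fun p : List (Fin n) × List (Fin n) => p.2.length) hp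
        omega
      rw [smul_mul_assoc, mul_assoc, YX_zero K n _ _ hpre h2, mul_zero, smul_zero]
  have hdne : d ≠ 0 := by
    intro h0
    rw [h0, map_zero] at hTd
    exact hσ hTd.symm
  obtain ⟨a, b, hab⟩ := key_x K n hn d hdne
  refine ⟨a, XW K n τ * b, ?_⟩
  have hds : (d.sum fun γ k => k • XW K n γ) = z * XW K n τ := by
    rw [← hTd, hT, Finsupp.linearCombination_apply]
  rw [← mul_assoc, mul_assoc a z, ← hds, hab]

end LeavittProof

/-- **Leavitt's simplicity theorem.**  For any field `K` and `n ≥ 2`, the Leavitt algebra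
`L_K(1,n)` is a simple ring (its only two-sided ideals are `{0}` and itself), and for
every nonzero `x ∈ L_K(1,n)` there exist `a, b` with `a x b = 1`. -/
theorem leavitt_algebra_simple (K : Type) [Field K] (n : ℕ) (hn : 2 ≤ n) :
    (∀ I : Set (LeavittAlgebra K n), IsTwoSidedIdealSet I → I = {0} ∨ I = Set.univ) ∧
      (∀ x : LeavittAlgebra K n, x ≠ 0 →
        ∃ a b : LeavittAlgebra K n, a * x * b = 1) := by
  have part2 : ∀ x : LeavittAlgebra K n, x ≠ 0 →
      ∃ a b : LeavittAlgebra K n, a * x * b = 1 :=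
    fun x hx => LeavittProof.main_step K n hn x hx
  refine ⟨?_, part2⟩
  intro I hI
  obtain ⟨h0, hadd, hneg, hmul⟩ := hI
  by_cases hI0 : I = {0}
  · exact Or.inl hI0
  · right
    have hex : ∃ x ∈ I, x ≠ 0 := by
      by_contra h
      push_neg at h
      exact hI0 (Set.eq_singleton_iff_unique_mem.mpr ⟨h0, fun x hx => h x hx⟩)
    obtain ⟨x, hxI, hx0⟩ := hex
    obtain ⟨a, b, hab⟩ := part2 x hx0
    have hax : a * x ∈ I := (hmul a x hxI).1
    have haxb : a * x * b ∈ I := (hmul b (a * x) hax).2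
    rw [hab] at haxb
    refine Set.eq_univ_of_forall fun r => ?_
    have := (hmul r 1 haxb).1
    rwa [mul_one] at this
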